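/- Let c ≥ 1 be a fixed real number. Then as r → ∞ through positive integers, ∫₀¹ ((4−t)/t)^{1/2} t^{c−1} cos(r·arccos(1−t/2)) dt = (3/r) · cos(rπ/3 − π/2) + o(r^{−1}). -/

import Mathlib

open Real Filter MeasureTheory Set Topology

lemma rl_sin (h : ℝ → ℝ) (hh : Integrable h) :
    Tendsto (fun r : ℕ => ∫ v : ℝ, h v * Real.sin (r * v)) atTop (𝓝 0) := by
  have hfi : Integrable (fun v : ℝ => (h v : ℂ)) := hh.ofReal
  have key := Real.tendsto_integral_exp_smul_cocompact (fun v : ℝ => (h v : ℂ))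
  have hcomp : Tendsto (fun r : ℕ => -((r:ℝ)/(2*π))) atTop (cocompact ℝ) := by
    have h1 : Tendsto (fun r : ℕ => -((r:ℝ)/(2*π))) atTop atBot := by
      rw [tendsto_neg_atBot_iff]
      exact (tendsto_natCast_atTop_atTop).atTop_div_const (by positivity)
    exact h1.mono_right (by rw [cocompact_eq_atBot_atTop]; exact le_sup_left)
  have T := key.comp hcomp
  have T2 := (Complex.continuous_im.tendsto 0).comp T
  simp only [Complex.zero_im, Function.comp] at T2
  refine T2.congr fun r => ?_
  have hint : Integrable (fun v : ℝ => (Real.fourierChar (-(v * -((r:ℝ)/(2*π))))) • (h v : ℂ)) volume :=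
    by have := (Real.fourierIntegral_convergent_iff (μ := volume) (-((r:ℝ)/(2*π)))).2 hfi; simpa [mul_comm] using this
  have him := integral_im hint
  rw [Function.comp_apply, Function.comp_apply,
    show (Complex.im : ℂ → ℝ) = (RCLike.im : ℂ → ℝ) from rfl, ← him]
  refine integral_congr_ae (Eventually.of_forall fun v => ?_)
  simp only [Circle.smul_def, Real.fourierChar_apply]
  have : 2 * π * -(v * -((r:ℝ)/(2*π))) = (r:ℝ) * v := by field_simp
  rw [this]
  show (Complex.exp _ * _).im = _
  rw [Complex.mul_im, Complex.exp_ofReal_mul_I_im, Complex.exp_ofReal_mul_I_re]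
  simp [mul_comm]

noncomputable def gg (c θ : ℝ) : ℝ := (2+2*Real.cos θ) * (2-2*Real.cos θ)^(c-1)
noncomputable def gg' (c θ : ℝ) : ℝ :=
  -(2*Real.sin θ) * (2-2*Real.cos θ)^(c-1)
    + (2+2*Real.cos θ) * ((c-1) * (2-2*Real.cos θ)^(c-1-1) * (2*Real.sin θ))

lemma contG (c : ℝ) (hc : 1 ≤ c) :
    Continuous (fun θ : ℝ => (2 - 2*Real.cos θ) ^ (c-1)) :=
  Continuous.rpow_const (by continuity) (fun x => Or.inr (by linarith))

lemma contgg (c : ℝ) (hc : 1 ≤ c) : Continuous (gg c) :=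
  (by continuity : Continuous fun θ : ℝ => 2+2*Real.cos θ).mul (contG c hc)

lemma base_pos {θ : ℝ} (h1 : 0 < θ) (h2 : θ < π) : 0 < 2 - 2*Real.cos θ := by
  have : Real.cos θ < Real.cos 0 := by
    apply Real.cos_lt_cos_of_nonneg_of_le_pi le_rfl h2.le h1
  rw [Real.cos_zero] at this; linarith

lemma hasDerivG (c : ℝ) {θ : ℝ} (h1 : 0 < θ) (h2 : θ < π) :
    HasDerivAt (fun θ : ℝ => (2 - 2*Real.cos θ) ^ (c-1))
      ((c-1) * (2 - 2*Real.cos θ)^(c-1-1) * (2*Real.sin θ)) θ := by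
  have hb : HasDerivAt (fun θ : ℝ => 2 - 2*Real.cos θ) (2*Real.sin θ) θ := by
    have := ((Real.hasDerivAt_cos θ).const_mul (2:ℝ)).const_sub 2
    simpa [mul_comm] using this
  have := hb.rpow_const (p := c-1) (Or.inl (base_pos h1 h2).ne')
  convert this using 1
  ring

lemma hasDerivgg (c : ℝ) {θ : ℝ} (h1 : 0 < θ) (h2 : θ < π) :
    HasDerivAt (gg c) (gg' c θ) θ := by
  have ha : HasDerivAt (fun θ : ℝ => 2 + 2*Real.cos θ) (-(2*Real.sin θ)) θ := by
    have := ((Real.hasDerivAt_cos θ).const_mul (2:ℝ)).const_add 2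
    simpa [mul_comm] using this
  exact ha.mul (hasDerivG c h1 h2)

lemma pi3_lt_pi : π/3 < π := by
  have := Real.pi_pos; linarith

lemma intG' (c : ℝ) (hc : 1 ≤ c) :
    IntegrableOn (fun θ => (c-1) * (2 - 2*Real.cos θ)^(c-1-1) * (2*Real.sin θ))
      (Ioo 0 (π/3)) := by
  apply IntegrableOn.mono_set _ Ioo_subset_Ioc_self
  apply intervalIntegral.integrableOn_deriv_of_nonneg
    ((contG c hc).continuousOn)
    (fun x hx => hasDerivG c hx.1 (hx.2.trans pi3_lt_pi))
  intro x hx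
  have hs : 0 ≤ Real.sin x := Real.sin_nonneg_of_nonneg_of_le_pi hx.1.le
    (hx.2.trans pi3_lt_pi).le
  have h4 : (0:ℝ) ≤ (2 - 2*Real.cos x)^(c-1-1) :=
    Real.rpow_nonneg (by nlinarith [Real.cos_le_one x]) _
  exact mul_nonneg (mul_nonneg (by linarith) h4) (by linarith)

lemma meas_aux (c : ℝ) : Measurable (fun θ => (c-1) * (2 - 2*Real.cos θ)^(c-1-1) * (2*Real.sin θ)) := by
  measurability

lemma intgg' (c : ℝ) (hc : 1 ≤ c) : IntegrableOn (gg' c) (Ioo 0 (π/3)) := by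
  have h1 : IntegrableOn (fun θ => -(2*Real.sin θ) * (2 - 2*Real.cos θ)^(c-1)) (Ioo 0 (π/3)) := by
    exact ((((continuous_const.mul Real.continuous_sin).neg).mul (contG c hc)).integrableOn_Icc
      (a := 0) (b := π/3)).mono_set Ioo_subset_Icc_self
  have h2 : IntegrableOn (fun θ => (2+2*Real.cos θ) *
      ((c-1) * (2 - 2*Real.cos θ)^(c-1-1) * (2*Real.sin θ))) (Ioo 0 (π/3)) := by
    apply Integrable.mono ((intG' c hc).const_mul 4)
    · exact ((measurable_const.add (Real.measurable_cos.const_mul 2)).mul (meas_aux c)).aestronglyMeasurable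
    · rw [ae_restrict_iff' measurableSet_Ioo]
      filter_upwards with x hx
      have hs : 0 ≤ Real.sin x := Real.sin_nonneg_of_nonneg_of_le_pi hx.1.le
        (hx.2.trans pi3_lt_pi).le
      have h4 : (0:ℝ) ≤ (2 - 2*Real.cos x)^(c-1-1) :=
        Real.rpow_nonneg (by nlinarith [Real.cos_le_one x]) _
      have hbnd : |2+2*Real.cos x| ≤ 4 := by
        rw [abs_le]; constructor <;> nlinarith [Real.cos_le_one x, Real.neg_one_le_cos x]
      rw [Real.norm_eq_abs, Real.norm_eq_abs, abs_mul]
      calc |2+2*Real.cos x| * |(c-1) * (2 - 2*Real.cos x)^(c-1-1) * (2*Real.sin x)|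
          ≤ 4 * |(c-1) * (2 - 2*Real.cos x)^(c-1-1) * (2*Real.sin x)| := by
            apply mul_le_mul_of_nonneg_right hbnd (abs_nonneg _)
        _ = |4 * ((c-1) * (2 - 2*Real.cos x)^(c-1-1) * (2*Real.sin x))| := by
            simp [abs_mul]
  exact h1.add h2

lemma meas_gg' (c : ℝ) : Measurable (gg' c) := by
  unfold gg'; measurability

lemma h0π3 : (0:ℝ) ≤ π/3 := by positivity

lemma intervalInt_gg'_sin (c : ℝ) (hc : 1 ≤ c) (r : ℕ) :
    IntervalIntegrable (fun θ => gg' c θ * Real.sin ((r:ℝ)*θ)) volume 0 (π/3) := by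
  rw [intervalIntegrable_iff, uIoc_of_le h0π3, integrableOn_Ioc_iff_integrableOn_Ioo]
  apply Integrable.mono (intgg' c hc)
  · exact ((meas_gg' c).mul (Real.measurable_sin.comp (measurable_const.mul measurable_id))).aestronglyMeasurable
  · filter_upwards with x
    rw [Real.norm_eq_abs, Real.norm_eq_abs, abs_mul]
    exact mul_le_of_le_one_right (abs_nonneg _) (Real.abs_sin_le_one _)

lemma ibp (c : ℝ) (hc : 1 ≤ c) (r : ℕ) :
    ∫ θ in (0:ℝ)..(π/3),
        (gg' c θ * Real.sin ((r:ℝ)*θ) + gg c θ * (Real.cos ((r:ℝ)*θ) * r))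
      = 3 * Real.sin ((r:ℝ)*(π/3)) := by
  have hsin : ∀ θ : ℝ, HasDerivAt (fun θ : ℝ => Real.sin ((r:ℝ)*θ))
      (Real.cos ((r:ℝ)*θ) * r) θ := by
    intro θ
    have h1 : HasDerivAt (fun θ : ℝ => (r:ℝ)*θ) ((r:ℝ)*1) θ := (hasDerivAt_id θ).const_mul (r:ℝ)
    simpa using h1.sin
  have key := intervalIntegral.integral_eq_sub_of_hasDeriv_right_of_le h0π3
    (f := fun θ => gg c θ * Real.sin ((r:ℝ)*θ))
    (f' := fun θ => gg' c θ * Real.sin ((r:ℝ)*θ) + gg c θ * (Real.cos ((r:ℝ)*θ) * r))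
    (((contgg c hc).mul (by continuity)).continuousOn)
    (fun x hx => ((hasDerivgg c hx.1 (hx.2.trans pi3_lt_pi)).mul (hsin x)).hasDerivWithinAt)
    ((intervalInt_gg'_sin c hc r).add
      (((contgg c hc).mul (by continuity)).intervalIntegrable _ _))
  rw [key]
  have h3 : gg c (π/3) = 3 := by
    simp [gg, Real.cos_pi_div_three]; norm_num
  simp only [h3]
  simp [mul_comm]

lemma hasDerivBase (θ : ℝ) : HasDerivAt (fun θ : ℝ => 2 - 2*Real.cos θ) (2*Real.sin θ) θ := by
  have := ((Real.hasDerivAt_cos θ).const_mul (2:ℝ)).const_sub 2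
  simpa [mul_comm] using this

lemma keyid (c : ℝ) (r : ℕ) {θ : ℝ} (h1 : 0 < θ) (h2 : θ ≤ π/3) :
    (2*Real.sin θ) * (((4 - (2-2*Real.cos θ)) / (2-2*Real.cos θ)) ^ ((1:ℝ)/2)
      * (2-2*Real.cos θ) ^ (c - 1)
      * Real.cos (r * Real.arccos (1 - (2-2*Real.cos θ)/2)))
    = gg c θ * Real.cos ((r:ℝ)*θ) := by
  have hπ : θ < π := lt_of_le_of_lt h2 pi3_lt_pi
  have hb : 0 < 2 - 2*Real.cos θ := base_pos h1 hπ
  have ha : 0 < 2 + 2*Real.cos θ := by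
    have : Real.cos π < Real.cos θ :=
      Real.cos_lt_cos_of_nonneg_of_le_pi h1.le le_rfl hπ
    rw [Real.cos_pi] at this; linarith
  have e1 : 1 - (2-2*Real.cos θ)/2 = Real.cos θ := by ring
  have e2 : 4 - (2-2*Real.cos θ) = 2 + 2*Real.cos θ := by ring
  rw [e1, e2, Real.arccos_cos h1.le hπ.le]
  have hkey : 2*Real.sin θ * ((2 + 2*Real.cos θ)/(2 - 2*Real.cos θ)) ^ ((1:ℝ)/2)
      = 2 + 2*Real.cos θ := by
    rw [← Real.sqrt_eq_rpow]
    have hs : 0 ≤ Real.sin θ := Real.sin_nonneg_of_nonneg_of_le_pi h1.le hπ.le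
    have hsin : 2*Real.sin θ = Real.sqrt ((2 + 2*Real.cos θ) * (2 - 2*Real.cos θ)) := by
      rw [show (2 + 2*Real.cos θ) * (2 - 2*Real.cos θ) = (2*Real.sin θ)^2 by
        nlinarith [Real.sin_sq_add_cos_sq θ]]
      rw [Real.sqrt_sq (by linarith)]
    rw [hsin, ← Real.sqrt_mul (mul_pos ha hb).le]
    rw [show (2 + 2*Real.cos θ) * (2 - 2*Real.cos θ) * ((2 + 2*Real.cos θ)/(2 - 2*Real.cos θ))
        = (2 + 2*Real.cos θ)^2 by rw [mul_assoc, mul_div_assoc', mul_div_cancel_left₀ _ hb.ne', sq]]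
    exact Real.sqrt_sq ha.le
  unfold gg
  linear_combination ((2-2*Real.cos θ) ^ (c - 1) * Real.cos ((r:ℝ)*θ)) * hkey

lemma subst (c : ℝ) (hc : 1 ≤ c) (r : ℕ) :
    (∫ t in (0:ℝ)..1, ((4 - t) / t) ^ ((1:ℝ)/2) * t ^ (c - 1) *
        Real.cos (r * Real.arccos (1 - t/2)))
      = ∫ θ in (0:ℝ)..(π/3), gg c θ * Real.cos ((r:ℝ)*θ) := by
  set g : ℝ → ℝ := fun t => ((4 - t) / t) ^ ((1:ℝ)/2) * t ^ (c - 1) *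
        Real.cos (r * Real.arccos (1 - t/2)) with hg
  have hmin : min (0:ℝ) (π/3) = 0 := min_eq_left h0π3
  have hmax : max (0:ℝ) (π/3) = π/3 := max_eq_right h0π3
  have himg : (fun θ => 2 - 2*Real.cos θ) '' (Ioo 0 (π/3)) ⊆ Ioo 0 1 := by
    rintro _ ⟨x, hx, rfl⟩
    refine ⟨base_pos hx.1 (hx.2.trans pi3_lt_pi), ?_⟩
    have : Real.cos (π/3) < Real.cos x :=
      Real.cos_lt_cos_of_nonneg_of_le_pi hx.1.le pi3_lt_pi.le hx.2
    rw [Real.cos_pi_div_three] at this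
    show 2 - 2*Real.cos x < 1
    linarith
  have himg2 : (fun θ => 2 - 2*Real.cos θ) '' (uIcc 0 (π/3)) ⊆ Icc 0 1 := by
    rw [uIcc_of_le h0π3]
    rintro _ ⟨x, hx, rfl⟩
    have hc1 : Real.cos (π/3) ≤ Real.cos x :=
      Real.cos_le_cos_of_nonneg_of_le_pi hx.1 pi3_lt_pi.le hx.2
    rw [Real.cos_pi_div_three] at hc1
    have hc2 : Real.cos x ≤ 1 := Real.cos_le_one x
    constructor <;> simp <;> linarith
  have hgmeas : Measurable g := by
    rw [hg]
    exact ((((measurable_const.sub measurable_id).div measurable_id).pow_const _).mul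
      (measurable_id.pow_const _)).mul
      (Real.measurable_cos.comp (measurable_const.mul
        (Real.measurable_arccos.comp (measurable_const.sub (measurable_id.div_const 2)))))
  have hgint : IntegrableOn g (Icc 0 1) := by
    rw [integrableOn_Icc_iff_integrableOn_Ioc]
    have hbd : IntegrableOn (fun t : ℝ => 2 * t ^ (c - 1 - 1/2)) (Ioc 0 1) := by
      have := intervalIntegral.intervalIntegrable_rpow' (a := 0) (b := 1)
        (r := c - 1 - 1/2) (by linarith)
      rw [intervalIntegrable_iff, uIoc_of_le zero_le_one] at this
      exact this.const_mul 2
    apply Integrable.mono hbd hgmeas.aestronglyMeasurable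
    rw [ae_restrict_iff' measurableSet_Ioc]
    filter_upwards with t ht
    have ht1 : 0 < t := ht.1
    have ht2 : t ≤ 1 := ht.2
    have hnn1 : (0:ℝ) ≤ (4 - t)/t := div_nonneg (by linarith) ht1.le
    have e2 : ((4 - t)/t) ^ ((1:ℝ)/2) ≤ (4/t) ^ ((1:ℝ)/2) :=
      Real.rpow_le_rpow hnn1 (by rw [div_le_div_iff_of_pos_right ht1]; linarith) (by norm_num)
    have e3 : (4/t : ℝ) ^ ((1:ℝ)/2) = 2 / t ^ ((1:ℝ)/2) := by
      rw [Real.div_rpow (by norm_num) ht1.le]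
      congr 1
      rw [← Real.sqrt_eq_rpow, show (4:ℝ) = 2^2 by norm_num, Real.sqrt_sq (by norm_num)]
    rw [Real.norm_eq_abs, Real.norm_eq_abs, hg]
    simp only
    rw [abs_mul, abs_mul]
    have hnn2 : (0:ℝ) ≤ ((4 - t)/t) ^ ((1:ℝ)/2) := Real.rpow_nonneg hnn1 _
    have hnn3 : (0:ℝ) ≤ t ^ (c-1) := Real.rpow_nonneg ht1.le _
    rw [abs_of_nonneg hnn2, abs_of_nonneg hnn3]
    have hcos : |Real.cos (r * Real.arccos (1 - t/2))| ≤ 1 := Real.abs_cos_le_one _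
    have hq : (0:ℝ) ≤ 2 / t ^ ((1:ℝ)/2) := div_nonneg (by norm_num) (Real.rpow_nonneg ht1.le _)
    calc ((4 - t)/t) ^ ((1:ℝ)/2) * t ^ (c-1) * |Real.cos (r * Real.arccos (1 - t/2))|
        ≤ (2 / t ^ ((1:ℝ)/2)) * t ^ (c-1) * 1 := by
          apply mul_le_mul (mul_le_mul (e2.trans e3.le) le_rfl hnn3 hq) hcos
            (abs_nonneg _) (mul_nonneg hq hnn3)
      _ = 2 * (t ^ (c-1) / t ^ ((1:ℝ)/2)) := by ring
      _ = 2 * t ^ (c - 1 - 1/2) := by rw [← Real.rpow_sub ht1]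
      _ = |2 * t ^ (c - 1 - 1/2)| :=
          (abs_of_nonneg (mul_nonneg (by norm_num) (Real.rpow_nonneg ht1.le _))).symm
  have hsub := intervalIntegral.integral_comp_smul_deriv''' (a := 0) (b := π/3)
    (f := fun θ => 2 - 2*Real.cos θ) (f' := fun θ => 2*Real.sin θ) (g := g)
    (by fun_prop)
    (by
      rw [hmin, hmax]
      exact fun x hx => (hasDerivBase x).hasDerivWithinAt)
    ?contg ?int1 ?int2
  case contg =>
    rw [hmin, hmax]
    apply ContinuousOn.mono _ himg
    apply ContinuousOn.mul
    apply ContinuousOn.mul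
    · exact ContinuousOn.rpow_const
        ((continuousOn_const.sub continuousOn_id).div continuousOn_id
          (fun t ht => ht.1.ne'))
        (fun t ht => Or.inr (by norm_num))
    · exact continuousOn_id.rpow_const (fun t ht => Or.inr (by linarith))
    · exact (Real.continuous_cos.comp (continuous_const.mul
        (Real.continuous_arccos.comp (continuous_const.sub
          (continuous_id.div_const 2))))).continuousOn
  case int1 => exact hgint.mono_set himg2
  case int2 =>
    rw [uIcc_of_le h0π3, integrableOn_Icc_iff_integrableOn_Ioc]
    apply IntegrableOn.congr_fun
      (f := fun θ => gg c θ * Real.cos ((r:ℝ)*θ))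
    · exact ((((contgg c hc).mul (by continuity)).integrableOn_Icc (a := 0)
        (b := π/3)).mono_set Ioc_subset_Icc_self)
    · intro x hx
      exact (keyid c r hx.1 hx.2).symm
    · exact measurableSet_Ioc
  rw [show (2:ℝ) - 2*Real.cos 0 = 0 by simp,
    show (2:ℝ) - 2*Real.cos (π/3) = 1 by
      rw [Real.cos_pi_div_three]; norm_num] at hsub
  rw [← hsub]
  apply intervalIntegral.integral_congr_ae
  filter_upwards with x hx
  rw [uIoc_of_le h0π3] at hx
  simp only [Function.comp_apply, smul_eq_mul]
  exact keyid c r hx.1 hx.2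

/-- Formula (7.8): for fixed `c ≥ 1`, as `r → ∞` through positive integers,
`∫₀¹ ((4−t)/t)^{1/2} t^{c−1} cos(r·arccos(1−t/2)) dt = (3/r) cos(rπ/3 − π/2) + o(r^{−1})`. -/
theorem S1_asymptotics_q_zero (c : ℝ) (hc : 1 ≤ c) :
    Tendsto (fun r : ℕ =>
        (r:ℝ) * ((∫ t in (0:ℝ)..1, ((4 - t) / t) ^ ((1:ℝ)/2) * t ^ (c - 1) *
            Real.cos (r * Real.arccos (1 - t/2))) -
          (3/(r:ℝ)) * Real.cos ((r:ℝ) * Real.pi / 3 - Real.pi/2)))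
      atTop (nhds 0) := by
  have heq : (fun r : ℕ =>
        (r:ℝ) * ((∫ t in (0:ℝ)..1, ((4 - t) / t) ^ ((1:ℝ)/2) * t ^ (c - 1) *
            Real.cos (r * Real.arccos (1 - t/2))) -
          (3/(r:ℝ)) * Real.cos ((r:ℝ) * Real.pi / 3 - Real.pi/2)))
      =ᶠ[atTop] (fun r : ℕ => -∫ θ in (0:ℝ)..(π/3), gg' c θ * Real.sin ((r:ℝ)*θ)) := by
    filter_upwards [eventually_ge_atTop 1] with r hr
    have hrpos : (0:ℝ) < r := by exact_mod_cast hr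
    rw [subst c hc r]
    have hsplit : ∫ θ in (0:ℝ)..(π/3),
          (gg' c θ * Real.sin ((r:ℝ)*θ) + gg c θ * (Real.cos ((r:ℝ)*θ) * r))
        = (∫ θ in (0:ℝ)..(π/3), gg' c θ * Real.sin ((r:ℝ)*θ))
          + ∫ θ in (0:ℝ)..(π/3), gg c θ * (Real.cos ((r:ℝ)*θ) * r) :=
      intervalIntegral.integral_add (intervalInt_gg'_sin c hc r)
        (((contgg c hc).mul (by continuity)).intervalIntegrable _ _)
    have hibp := ibp c hc r
    rw [hsplit] at hibp
    have hmul : ∫ θ in (0:ℝ)..(π/3), gg c θ * (Real.cos ((r:ℝ)*θ) * r)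
        = (r:ℝ) * ∫ θ in (0:ℝ)..(π/3), gg c θ * Real.cos ((r:ℝ)*θ) := by
      rw [← intervalIntegral.integral_const_mul]
      apply intervalIntegral.integral_congr
      intro x _
      simp only
      ring
    rw [hmul] at hibp
    have hcos : Real.cos ((r:ℝ) * Real.pi / 3 - Real.pi/2) = Real.sin ((r:ℝ)*(π/3)) := by
      rw [← Real.cos_neg, neg_sub, Real.cos_pi_div_two_sub, mul_div_assoc]
    rw [hcos]
    have hr0 : (r:ℝ) ≠ 0 := hrpos.ne'
    field_simp
    rw [show (r:ℝ) * π / 3 = (r:ℝ) * (π/3) from by ring]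
    linarith [hibp]
  have hind : Integrable ((Ioo (0:ℝ) (π/3)).indicator (gg' c)) :=
    (intgg' c hc).integrable_indicator measurableSet_Ioo
  have h0 := rl_sin _ hind
  have hre : ∀ r : ℕ, (∫ v : ℝ, (Ioo (0:ℝ) (π/3)).indicator (gg' c) v * Real.sin ((r:ℝ)*v))
      = ∫ θ in (0:ℝ)..(π/3), gg' c θ * Real.sin ((r:ℝ)*θ) := by
    intro r
    rw [intervalIntegral.integral_of_le h0π3, integral_Ioc_eq_integral_Ioo,
      ← integral_indicator measurableSet_Ioo]
    congr 1
    funext v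
    exact (Set.indicator_mul_left (M₀ := ℝ) (i := v) (Ioo 0 (π/3)) (gg' c)
      (fun t => Real.sin ((r:ℝ)*t))).symm
  have h1 : Tendsto (fun r : ℕ => ∫ θ in (0:ℝ)..(π/3), gg' c θ * Real.sin ((r:ℝ)*θ))
      atTop (𝓝 0) := by
    apply h0.congr
    intro r
    exact hre r
  have h2 := h1.neg
  rw [neg_zero] at h2
  exact Tendsto.congr' heq.symm h2
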